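/- arXiv:math/0406157 — 2 statements merged into one kernel-verified Lean document; each statement's English description precedes it below -/
import Mathlib

section
/- Let N = n², m ≥ 1, q = N/(N+m−1), and let Z be the number of edges of the support of a uniformly random bipartite multigraph from B'(n,m). Then for every λ > 0, Pr[|Z − mq| > λ] ≤ mq/λ². -/
open scoped Classical

/-- The finite set `B'(n,m)` of all bipartite multigraphs on the vertex set of the
complete bipartite graph `K_{n,n}` with total edge multiplicity `m`: a multigraph is
a multiplicity function on the `n²` possible edges, which we encode as the pairs
`(i,j)` (the edge joining left-vertex `i` to right-vertex `j`). -/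
def multigraphs (n m : ℕ) : Finset (Fin n × Fin n → ℕ) :=
  (Fintype.piFinset fun _ : Fin n × Fin n => Finset.range (m + 1)).filter
    fun f => ∑ e, f e = m

/-- The number of edges of the support of a multigraph, i.e. the number of edges
with positive multiplicity. -/
def suppSize {n : ℕ} (f : Fin n × Fin n → ℕ) : ℕ :=
  (Finset.univ.filter fun e => 0 < f e).card

lemma card_piAntidiag_univ (κ : Type*) [Fintype κ] [DecidableEq κ] (m : ℕ) :
    (Finset.piAntidiag (Finset.univ : Finset κ) m).card = (Fintype.card κ + m - 1).choose m := by
  rw [← Finset.map_sym_eq_piAntidiag, Finset.card_map, Finset.sym_univ, Finset.card_univ,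
    Sym.card_sym_eq_choose]

lemma card_piAntidiag {ι : Type*} [Fintype ι] [DecidableEq ι] (U : Finset ι) (m : ℕ) :
    (Finset.piAntidiag U m).card = (U.card + m - 1).choose m := by
  have : (Finset.piAntidiag U m).card
      = (Finset.piAntidiag (Finset.univ : Finset ↥U) m).card := by
    refine Finset.card_nbij' (fun f u => f u.val)
      (fun g a => if h : a ∈ U then g ⟨a, h⟩ else 0) ?_ ?_ ?_ ?_
    · intro f hf
      rw [Finset.mem_coe, Finset.mem_piAntidiag] at hf ⊢
      refine ⟨?_, fun i _ => Finset.mem_univ i⟩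
      rw [Finset.sum_coe_sort U f]
      exact hf.1
    · intro g hg
      rw [Finset.mem_coe, Finset.mem_piAntidiag] at hg ⊢
      constructor
      · rw [← hg.1]
        rw [← Finset.sum_coe_sort U]
        exact Finset.sum_congr rfl (fun u _ => by simp [u.2])
      · intro i hi
        by_contra hmem
        simp [hmem] at hi
    · intro f hf
      rw [Finset.mem_coe, Finset.mem_piAntidiag] at hf
      funext a
      by_cases h : a ∈ U
      · simp [h]
      · simp [h, eq_comm]
        by_contra hne
        exact h (hf.2 a (by omega))
    · intro g hg
      funext u
      simp [u.2]
  rw [this, card_piAntidiag_univ]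
  congr 2
  simp

lemma multigraphs_eq (n m : ℕ) :
    multigraphs n m = Finset.piAntidiag (Finset.univ : Finset (Fin n × Fin n)) m := by
  ext f
  simp only [multigraphs, Finset.mem_filter, Fintype.mem_piFinset, Finset.mem_range,
    Nat.lt_succ_iff, Finset.mem_piAntidiag]
  constructor
  · rintro ⟨h1, h2⟩
    exact ⟨h2, fun i _ => Finset.mem_univ i⟩
  · rintro ⟨h1, -⟩
    refine ⟨fun e => ?_, h1⟩
    calc f e ≤ ∑ e, f e := Finset.single_le_sum (fun i _ => Nat.zero_le _) (Finset.mem_univ e)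
    _ = m := h1

lemma multigraphs_filter_one (n m : ℕ) (e : Fin n × Fin n) :
    (multigraphs n m).filter (fun f => f e = 0)
      = Finset.piAntidiag ((Finset.univ : Finset (Fin n × Fin n)).erase e) m := by
  rw [multigraphs_eq]
  ext f
  simp only [Finset.mem_filter, Finset.mem_piAntidiag]
  constructor
  · rintro ⟨⟨h1, -⟩, h2⟩
    constructor
    · rw [← h1, ← Finset.add_sum_erase _ f (Finset.mem_univ e), h2, zero_add]
    · intro i hi
      rcases eq_or_ne i e with rfl | hne
      · exact absurd h2 hi
      · exact Finset.mem_erase.2 ⟨hne, Finset.mem_univ i⟩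
  · rintro ⟨h1, h2⟩
    have he : f e = 0 := by
      by_contra h
      exact (Finset.mem_erase.1 (h2 e h)).1 rfl
    refine ⟨⟨?_, fun i _ => Finset.mem_univ i⟩, he⟩
    rw [← Finset.add_sum_erase _ f (Finset.mem_univ e), he, zero_add, h1]

lemma multigraphs_filter_two (n m : ℕ) (e e' : Fin n × Fin n) (hne : e ≠ e') :
    (multigraphs n m).filter (fun f => f e = 0 ∧ f e' = 0)
      = Finset.piAntidiag (((Finset.univ : Finset (Fin n × Fin n)).erase e).erase e') m := by
  rw [multigraphs_eq]
  ext f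
  simp only [Finset.mem_filter, Finset.mem_piAntidiag]
  constructor
  · rintro ⟨⟨h1, -⟩, h2, h3⟩
    constructor
    · rw [← h1]
      rw [← Finset.add_sum_erase _ f (Finset.mem_univ e), h2, zero_add,
        ← Finset.add_sum_erase _ f (Finset.mem_erase.2 ⟨Ne.symm hne, Finset.mem_univ e'⟩),
        h3, zero_add]
    · intro i hi
      rcases eq_or_ne i e with rfl | h4
      · exact absurd h2 hi
      rcases eq_or_ne i e' with rfl | h5
      · exact absurd h3 hi
      · exact Finset.mem_erase.2 ⟨h5, Finset.mem_erase.2 ⟨h4, Finset.mem_univ i⟩⟩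
  · rintro ⟨h1, h2⟩
    have he : f e = 0 := by
      by_contra h
      exact (Finset.mem_erase.1 (Finset.mem_erase.1 (h2 e h)).2).1 rfl
    have he' : f e' = 0 := by
      by_contra h
      exact (Finset.mem_erase.1 (h2 e' h)).1 rfl
    refine ⟨⟨?_, fun i _ => Finset.mem_univ i⟩, he, he'⟩
    rw [← Finset.add_sum_erase _ f (Finset.mem_univ e), he, zero_add,
      ← Finset.add_sum_erase _ f (Finset.mem_erase.2 ⟨Ne.symm hne, Finset.mem_univ e'⟩),
      he', zero_add, h1]

lemma variance_bound (Nr M c0 c1 c2 : ℝ) (hN : 1 ≤ Nr) (hM : 1 ≤ M)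
    (hc0 : 0 ≤ c0)
    (h1 : c1 * (Nr + M - 1) = c0 * (Nr - 1))
    (h2 : Nr = 1 ∨ (2 ≤ Nr ∧ c2 * (Nr + M - 2) = c1 * (Nr - 2))) :
    (Nr*(c0 - c1) + Nr*(Nr-1)*(c0 - 2*c1 + c2))
      - 2*(M*(Nr/(Nr+M-1)))*(Nr*(c0-c1)) + (M*(Nr/(Nr+M-1)))^2*c0
      ≤ (M*(Nr/(Nr+M-1)))*c0 := by
  have hd : (1:ℝ) ≤ Nr + M - 1 := by linarith
  have hd0 : (Nr + M - 1) ≠ 0 := by linarith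
  have hdpos : (0:ℝ) < Nr + M - 1 := by linarith
  have hS1 : Nr * (c0 - c1) = (M*(Nr/(Nr+M-1))) * c0 := by
    rw [mul_div_assoc', div_mul_eq_mul_div, eq_div_iff hd0]
    linear_combination (-Nr) * h1
  have hmain : Nr*(Nr-1)*(c0 - 2*c1 + c2) ≤ (M*(Nr/(Nr+M-1)))^2 * c0 := by
    have hrw : (M*(Nr/(Nr+M-1)))^2 * c0 = M^2*Nr^2*c0/(Nr+M-1)^2 := by
      rw [mul_pow, div_pow]; ring
    rw [hrw, le_div_iff₀ (by positivity)]
    rcases h2 with h2 | ⟨hN2, h2⟩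
    · subst h2
      have : (1:ℝ)*(1-1)*(c0-2*c1+c2)*(1+M-1)^2 = 0 := by ring
      rw [this]; positivity
    · have hd2 : (0:ℝ) < Nr + M - 2 := by linarith
      have hc2d : c2 * ((Nr+M-1) * (Nr+M-2)) = c0 * ((Nr-1)*(Nr-2)) := by
        linear_combination (Nr+M-1) * h2 + (Nr-2) * h1
      have hkey : Nr*(Nr-1)*(c0 - 2*c1 + c2)*(Nr+M-1)^2*(Nr+M-2)
          = Nr*(Nr-1)*c0*(Nr+M-1)*(M*(M-1)) := by
        linear_combination (-2*Nr*(Nr-1)*(Nr+M-1)*(Nr+M-2))*h1 + (Nr*(Nr-1)*(Nr+M-1))*hc2d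
      have hscalar : (Nr-1)*(Nr+M-1)*(M-1) ≤ Nr*M*(Nr+M-2) := by
        nlinarith [sq_nonneg (M-1)]
      have hstep : Nr*(Nr-1)*(c0 - 2*c1 + c2)*(Nr+M-1)^2*(Nr+M-2)
          ≤ M^2*Nr^2*c0*(Nr+M-2) := by
        rw [hkey]
        calc Nr*(Nr-1)*c0*(Nr+M-1)*(M*(M-1))
            = (Nr*M*c0) * ((Nr-1)*(Nr+M-1)*(M-1)) := by ring
          _ ≤ (Nr*M*c0) * (Nr*M*(Nr+M-2)) := by
              exact mul_le_mul_of_nonneg_left hscalar (by positivity)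
          _ = M^2*Nr^2*c0*(Nr+M-2) := by ring
      have := le_of_mul_le_mul_right (by linarith [hstep] :
        Nr*(Nr-1)*(c0 - 2*c1 + c2)*(Nr+M-1)^2*(Nr+M-2) ≤ M^2*Nr^2*c0*(Nr+M-2)) hd2
      linarith [this]
  have hexp : 2*(M*(Nr/(Nr+M-1)))*(Nr*(c0-c1)) = 2*((M*(Nr/(Nr+M-1)))^2*c0) := by
    rw [hS1]; ring
  linarith [hmain, hS1, hexp]

/-- Chebyshev-type bound: for the support size `Z` of a uniformly random bipartite
multigraph from `B'(n,m)`, with `N = n²` and `q = N/(N+m−1)`, for every `λ > 0`,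
`Pr[|Z − mq| > λ] ≤ mq/λ²`. -/
theorem suppSize_concentration (n m : ℕ) (hm : 1 ≤ m) (lam : ℝ) (hlam : 0 < lam) :
    (((multigraphs n m).filter fun f =>
        lam < |(suppSize f : ℝ) -
          (m : ℝ) * ((n : ℝ) ^ 2 / ((n : ℝ) ^ 2 + (m : ℝ) - 1))|).card : ℝ) /
        ((multigraphs n m).card : ℝ) ≤
      (m : ℝ) * ((n : ℝ) ^ 2 / ((n : ℝ) ^ 2 + (m : ℝ) - 1)) / lam ^ 2 := by
  classical
  by_cases hn : n = 0
  · subst hn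
    have hSe : multigraphs 0 m = ∅ := by
      ext f
      simp only [multigraphs, Finset.mem_filter, Finset.notMem_empty, iff_false, not_and]
      intro _
      simp only [Finset.univ_eq_empty, Finset.sum_empty]
      omega
    rw [hSe]
    simp only [Finset.filter_empty, Finset.card_empty, Nat.cast_zero, zero_div]
    norm_num
  · have hn1 : 1 ≤ n := Nat.one_le_iff_ne_zero.2 hn
    set N : ℕ := n * n with hNdef
    have hN1 : 1 ≤ N := Nat.one_le_iff_ne_zero.2 (Nat.mul_ne_zero hn hn)
    have hNr : ((N : ℕ) : ℝ) = (n : ℝ) ^ 2 := by rw [hNdef]; push_cast; ring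
    have hcardU : (Finset.univ : Finset (Fin n × Fin n)).card = N := by
      simp [hNdef]
    set a0 : ℕ := (N + m - 1).choose m with ha0def
    set a1 : ℕ := (N + m - 2).choose m with ha1def
    set a2 : ℕ := (N + m - 3).choose m with ha2def
    have hc0 : (multigraphs n m).card = a0 := by
      rw [multigraphs_eq, card_piAntidiag, hcardU]
    have hc1 : ∀ e, ((multigraphs n m).filter fun f => f e = 0).card = a1 := by
      intro e
      rw [multigraphs_filter_one, card_piAntidiag,
        Finset.card_erase_of_mem (Finset.mem_univ e), hcardU, ha1def]
      congr 1
      omega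
    have hc2 : ∀ e e', e ≠ e' →
        ((multigraphs n m).filter fun f => f e = 0 ∧ f e' = 0).card = a2 := by
      intro e e' hne
      have hN2 : 2 ≤ N := by
        have h1 : ({e, e'} : Finset (Fin n × Fin n)).card = 2 := Finset.card_pair hne
        have h2 : ({e, e'} : Finset (Fin n × Fin n)).card ≤ N := by
          rw [← hcardU]; exact Finset.card_le_card (Finset.subset_univ _)
        omega
      rw [multigraphs_filter_two n m e e' hne, card_piAntidiag,
        Finset.card_erase_of_mem
          (Finset.mem_erase.2 ⟨Ne.symm hne, Finset.mem_univ e'⟩),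
        Finset.card_erase_of_mem (Finset.mem_univ e), hcardU, ha2def]
      congr 1
      omega
    have ha0pos : 0 < a0 := Nat.choose_pos (by omega)
    -- real per-edge counts
    have hpose : ∀ e, (((multigraphs n m).filter fun f => 0 < f e).card : ℝ)
        = (a0 : ℝ) - (a1 : ℝ) := by
      intro e
      have hsplit := Finset.card_filter_add_card_filter_not
        (s := multigraphs n m) (p := fun f => 0 < f e)
      have heq : (multigraphs n m).filter (fun f => ¬ 0 < f e)
          = (multigraphs n m).filter (fun f => f e = 0) := by
        apply Finset.filter_congr
        intro f _
        simp [Nat.pos_iff_ne_zero]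
      rw [heq, hc1 e, hc0] at hsplit
      have := congrArg (fun k : ℕ => (k : ℝ)) hsplit
      push_cast at this
      linarith
    have hbothe : ∀ e e', e ≠ e' →
        (((multigraphs n m).filter fun f => 0 < f e ∧ 0 < f e').card : ℝ)
          = (a0 : ℝ) - 2*(a1:ℝ) + (a2:ℝ) := by
      intro e e' hne
      have hsplit := Finset.card_filter_add_card_filter_not
        (s := multigraphs n m) (p := fun f => 0 < f e ∧ 0 < f e')
      have heq : (multigraphs n m).filter (fun f => ¬ (0 < f e ∧ 0 < f e'))
          = (multigraphs n m).filter (fun f => f e = 0 ∨ f e' = 0) := by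
        apply Finset.filter_congr
        intro f _
        simp only [Nat.pos_iff_ne_zero, not_and_or, not_not]
      rw [heq, hc0] at hsplit
      have hor : ((multigraphs n m).filter (fun f => f e = 0 ∨ f e' = 0)).card
          + ((multigraphs n m).filter (fun f => f e = 0 ∧ f e' = 0)).card
          = a1 + a1 := by
        rw [Finset.filter_or, Finset.filter_and, Finset.card_union_add_card_inter,
          hc1 e, hc1 e']
      rw [hc2 e e' hne] at hor
      have h1 := congrArg (fun k : ℕ => (k : ℝ)) hsplit
      have h2 := congrArg (fun k : ℕ => (k : ℝ)) hor
      push_cast at h1 h2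
      linarith
    -- Z as a sum of indicators
    have hZdef : ∀ f : Fin n × Fin n → ℕ, (suppSize f : ℝ)
        = ∑ e, (if 0 < f e then (1:ℝ) else 0) := by
      intro f
      rw [suppSize, Finset.sum_boole]
    set S := multigraphs n m with hSdef
    have hS1sum : ∑ f ∈ S, (suppSize f : ℝ) = (N:ℝ) * ((a0:ℝ) - (a1:ℝ)) := by
      calc ∑ f ∈ S, (suppSize f : ℝ)
          = ∑ f ∈ S, ∑ e, (if 0 < f e then (1:ℝ) else 0) :=
            Finset.sum_congr rfl (fun f _ => hZdef f)
        _ = ∑ e, ∑ f ∈ S, (if 0 < f e then (1:ℝ) else 0) := Finset.sum_comm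
        _ = ∑ e : Fin n × Fin n, ((S.filter fun f => 0 < f e).card : ℝ) :=
            Finset.sum_congr rfl (fun e _ => by rw [Finset.sum_boole])
        _ = ∑ _e : Fin n × Fin n, ((a0:ℝ) - (a1:ℝ)) :=
            Finset.sum_congr rfl (fun e _ => hpose e)
        _ = (N:ℝ) * ((a0:ℝ) - (a1:ℝ)) := by
            rw [Finset.sum_const, hcardU, nsmul_eq_mul]
    have hXX : ∀ (f : Fin n × Fin n → ℕ) (e e' : Fin n × Fin n),
        (if 0 < f e then (1:ℝ) else 0) * (if 0 < f e' then (1:ℝ) else 0)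
          = if (0 < f e ∧ 0 < f e') then (1:ℝ) else 0 := by
      intro f e e'
      by_cases h1 : 0 < f e <;> by_cases h2 : 0 < f e' <;> simp [h1, h2]
    have hS2sum : ∑ f ∈ S, (suppSize f : ℝ)^2
        = (N:ℝ) * ((a0:ℝ) - (a1:ℝ))
          + (N:ℝ) * ((N:ℝ) - 1) * ((a0:ℝ) - 2*(a1:ℝ) + (a2:ℝ)) := by
      have step1 : ∑ f ∈ S, (suppSize f : ℝ)^2
          = ∑ e, ∑ e', ((S.filter fun f => 0 < f e ∧ 0 < f e').card : ℝ) := by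
        calc ∑ f ∈ S, (suppSize f : ℝ)^2
            = ∑ f ∈ S, ∑ e, ∑ e', (if (0 < f e ∧ 0 < f e') then (1:ℝ) else 0) := by
              refine Finset.sum_congr rfl (fun f _ => ?_)
              rw [hZdef f, sq, Finset.sum_mul_sum]
              exact Finset.sum_congr rfl (fun e _ =>
                Finset.sum_congr rfl (fun e' _ => hXX f e e'))
          _ = ∑ e, ∑ f ∈ S, ∑ e', (if (0 < f e ∧ 0 < f e') then (1:ℝ) else 0) :=
              Finset.sum_comm
          _ = ∑ e, ∑ e', ∑ f ∈ S, (if (0 < f e ∧ 0 < f e') then (1:ℝ) else 0) :=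
              Finset.sum_congr rfl (fun e _ => Finset.sum_comm)
          _ = ∑ e, ∑ e', ((S.filter fun f => 0 < f e ∧ 0 < f e').card : ℝ) :=
              Finset.sum_congr rfl (fun e _ => Finset.sum_congr rfl (fun e' _ => by
                rw [Finset.sum_boole]))
      rw [step1]
      have step2 : ∀ e : Fin n × Fin n,
          ∑ e', ((S.filter fun f => 0 < f e ∧ 0 < f e').card : ℝ)
            = ((a0:ℝ) - (a1:ℝ)) + ((N:ℝ) - 1) * ((a0:ℝ) - 2*(a1:ℝ) + (a2:ℝ)) := by
        intro e
        rw [← Finset.add_sum_erase _ _ (Finset.mem_univ e)]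
        congr 1
        · have : (S.filter fun f => 0 < f e ∧ 0 < f e) = S.filter fun f => 0 < f e := by
            apply Finset.filter_congr
            intro f _
            omega
          rw [this, hpose e]
        · have hall : ∀ e' ∈ Finset.univ.erase e,
              ((S.filter fun f => 0 < f e ∧ 0 < f e').card : ℝ)
                = (a0:ℝ) - 2*(a1:ℝ) + (a2:ℝ) := by
            intro e' he'
            exact hbothe e e' (Ne.symm (Finset.mem_erase.1 he').1)
          rw [Finset.sum_congr rfl hall, Finset.sum_const,
            Finset.card_erase_of_mem (Finset.mem_univ e), hcardU, nsmul_eq_mul]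
          congr 1
          push_cast [Nat.cast_sub hN1]
          ring
      rw [Finset.sum_congr rfl (fun e _ => step2 e), Finset.sum_const, hcardU,
        nsmul_eq_mul]
      ring
    set mu : ℝ := (m : ℝ) * ((n : ℝ) ^ 2 / ((n : ℝ) ^ 2 + (m : ℝ) - 1)) with hmudef
    have hvar : ∑ f ∈ S, ((suppSize f : ℝ) - mu)^2
        = (∑ f ∈ S, (suppSize f : ℝ)^2) - 2*mu*(∑ f ∈ S, (suppSize f : ℝ))
          + mu^2 * (a0:ℝ) := by
      calc ∑ f ∈ S, ((suppSize f : ℝ) - mu)^2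
          = ∑ f ∈ S, ((suppSize f : ℝ)^2 - 2*mu*(suppSize f : ℝ) + mu^2) :=
            Finset.sum_congr rfl (fun f _ => by ring)
        _ = (∑ f ∈ S, (suppSize f : ℝ)^2) - 2*mu*(∑ f ∈ S, (suppSize f : ℝ))
              + mu^2 * (a0:ℝ) := by
            rw [Finset.sum_add_distrib, Finset.sum_sub_distrib, ← Finset.mul_sum,
              Finset.sum_const, hc0, nsmul_eq_mul]
            ring
    -- binomial identities
    have natid1 : a1 * (N + m - 1) = a0 * (N - 1) := by
      have h := Nat.choose_mul_succ_eq (N + m - 2) m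
      have e1 : N + m - 2 + 1 = N + m - 1 := by omega
      have e2 : N + m - 1 - m = N - 1 := by omega
      rw [e1, e2] at h
      exact h
    have h1r : (a1:ℝ) * ((n:ℝ)^2 + (m:ℝ) - 1) = (a0:ℝ) * ((n:ℝ)^2 - 1) := by
      have := congrArg (fun k : ℕ => (k : ℝ)) natid1
      push_cast [Nat.cast_sub (by omega : 1 ≤ N + m), Nat.cast_sub hN1] at this
      rw [← hNr]
      linarith
    have hNr1 : (1:ℝ) ≤ (n:ℝ)^2 := by
      rw [← hNr]; exact_mod_cast hN1
    have hMr1 : (1:ℝ) ≤ (m:ℝ) := by exact_mod_cast hm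
    have h2r : (n:ℝ)^2 = 1 ∨ (2 ≤ (n:ℝ)^2 ∧
        (a2:ℝ) * ((n:ℝ)^2 + (m:ℝ) - 2) = (a1:ℝ) * ((n:ℝ)^2 - 2)) := by
      by_cases hN2 : 2 ≤ N
      · right
        refine ⟨by rw [← hNr]; exact_mod_cast hN2, ?_⟩
        have natid2 : a2 * (N + m - 2) = a1 * (N - 2) := by
          have h := Nat.choose_mul_succ_eq (N + m - 3) m
          have e1 : N + m - 3 + 1 = N + m - 2 := by omega
          have e2 : N + m - 2 - m = N - 2 := by omega
          rw [e1, e2] at h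
          exact h
        have := congrArg (fun k : ℕ => (k : ℝ)) natid2
        push_cast [Nat.cast_sub (by omega : 2 ≤ N + m), Nat.cast_sub hN2] at this
        rw [← hNr]
        linarith
      · left
        have : N = 1 := by omega
        rw [← hNr]
        exact_mod_cast this
    have hbound : ∑ f ∈ S, ((suppSize f : ℝ) - mu)^2 ≤ mu * (a0:ℝ) := by
      rw [hvar, hS1sum, hS2sum, hNr]
      exact variance_bound ((n:ℝ)^2) (m:ℝ) (a0:ℝ) (a1:ℝ) (a2:ℝ) hNr1 hMr1
        (by positivity) h1r h2r
    -- Chebyshev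
    set T := S.filter (fun f => lam < |(suppSize f : ℝ) - mu|) with hTdef
    have cheb : lam^2 * (T.card : ℝ) ≤ mu * (a0:ℝ) := by
      calc lam^2 * (T.card : ℝ) = ∑ _f ∈ T, lam^2 := by
            rw [Finset.sum_const, nsmul_eq_mul]; ring
        _ ≤ ∑ f ∈ T, ((suppSize f : ℝ) - mu)^2 := by
            refine Finset.sum_le_sum (fun f hf => ?_)
            have hlt := (Finset.mem_filter.1 hf).2
            have h1 : lam^2 < |(suppSize f : ℝ) - mu|^2 := by
              have := pow_lt_pow_left₀ hlt hlam.le (n := 2) (by norm_num)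
              exact this
            rw [sq_abs] at h1
            linarith
        _ ≤ ∑ f ∈ S, ((suppSize f : ℝ) - mu)^2 :=
            Finset.sum_le_sum_of_subset_of_nonneg (Finset.filter_subset _ _)
              (fun f _ _ => sq_nonneg _)
        _ ≤ mu * (a0:ℝ) := hbound
    have hc0r : (0:ℝ) < (S.card : ℝ) := by
      rw [hc0]; exact_mod_cast ha0pos
    rw [div_le_div_iff₀ hc0r (by positivity)]
    rw [hc0]
    nlinarith [cheb]
end

section
/- Let N = n², let m = m(n) be a sequence with m(n) → ∞ and m(n)/N → 0, set q = N/(N+m−1), and let Z = Z(n) be the number of edges of the support of a uniformly random bipartite multigraph from B'(n,m). Then Z = mq + o_p(mq); that is, for every ε > 0, Pr[|Z − mq| > ε·mq] → 0 as n → ∞. -/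
set_option maxHeartbeats 1000000


open scoped Classical

lemma mem_multigraphs {n m : ℕ} {f : Fin n × Fin n → ℕ} :
    f ∈ multigraphs n m ↔ ∑ e, f e = m := by
  constructor
  · intro h; exact (Finset.mem_filter.mp h).2
  · intro h
    refine Finset.mem_filter.mpr ⟨?_, h⟩
    refine Fintype.mem_piFinset.mpr fun e => ?_
    rw [Finset.mem_range, Nat.lt_succ_iff, ← h]
    exact Finset.single_le_sum (fun _ _ => Nat.zero_le _) (Finset.mem_univ e)

lemma suppSize_le {n m : ℕ} {f : Fin n × Fin n → ℕ} (hf : f ∈ multigraphs n m) :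
    suppSize f ≤ m := by
  rw [← mem_multigraphs.mp hf]
  calc suppSize f = ∑ _e ∈ Finset.univ.filter (fun e => 0 < f e), 1 := by
        simp [suppSize]
    _ ≤ ∑ e ∈ Finset.univ.filter (fun e => 0 < f e), f e :=
        Finset.sum_le_sum fun e he => (Finset.mem_filter.mp he).2
    _ ≤ ∑ e, f e := Finset.sum_le_sum_of_subset (Finset.filter_subset _ _)

lemma sum_comp {n m : ℕ} (e : Fin n × Fin n) (F : ℕ → ℕ) :
    ∑ f ∈ (multigraphs n (m+1)).filter (fun f => 0 < f e), F (f e)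
      = ∑ g ∈ multigraphs n m, F (g e + 1) := by
  refine Finset.sum_nbij' (i := fun f => Function.update f e (f e - 1))
    (j := fun g => Function.update g e (g e + 1)) ?_ ?_ ?_ ?_ ?_
  · intro f hf
    obtain ⟨hf1, hf2⟩ := Finset.mem_filter.mp hf
    have hsum := mem_multigraphs.mp hf1
    refine mem_multigraphs.mpr ?_
    rw [Finset.sum_update_of_mem (Finset.mem_univ e)]
    rw [← Finset.sum_erase_add _ _ (Finset.mem_univ e), Finset.sdiff_singleton_eq_erase] at *
    omega
  · intro g hg
    have hsum := mem_multigraphs.mp hg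
    refine Finset.mem_filter.mpr ⟨mem_multigraphs.mpr ?_, by simp⟩
    rw [Finset.sum_update_of_mem (Finset.mem_univ e)]
    rw [← Finset.sum_erase_add _ _ (Finset.mem_univ e), Finset.sdiff_singleton_eq_erase] at *
    omega
  · intro f hf
    obtain ⟨-, hf2⟩ := Finset.mem_filter.mp hf
    funext x
    rcases eq_or_ne x e with rfl | hx
    · simp [Function.update_self]; omega
    · simp [Function.update_of_ne hx]
  · intro g hg
    funext x
    rcases eq_or_ne x e with rfl | hx
    · simp [Function.update_self]
    · simp [Function.update_of_ne hx]
  · intro f hf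
    obtain ⟨-, hf2⟩ := Finset.mem_filter.mp hf
    have : f e - 1 + 1 = f e := by omega
    simp [Function.update_self, this]

lemma identity1 {n m : ℕ} :
    (m+1) * (multigraphs n (m+1)).card = (n^2 + m) * (multigraphs n m).card := by
  have key : ∀ e : Fin n × Fin n, ∑ f ∈ multigraphs n (m+1), f e
      = (∑ g ∈ multigraphs n m, g e) + (multigraphs n m).card := by
    intro e
    have h1 : ∑ f ∈ (multigraphs n (m+1)).filter (fun f => 0 < f e), f e
        = ∑ f ∈ multigraphs n (m+1), f e :=
      Finset.sum_filter_of_ne (fun f _ h => Nat.pos_of_ne_zero h)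
    rw [← h1, sum_comp e (fun x => x), Finset.sum_add_distrib]
    simp
  calc (m+1) * (multigraphs n (m+1)).card
      = ∑ f ∈ multigraphs n (m+1), ∑ e, f e := by
        rw [Finset.sum_congr rfl (fun f hf => mem_multigraphs.mp hf)]
        rw [Finset.sum_const, smul_eq_mul, mul_comm]
    _ = ∑ e : Fin n × Fin n, ∑ f ∈ multigraphs n (m+1), f e := Finset.sum_comm
    _ = ∑ e : Fin n × Fin n, ((∑ g ∈ multigraphs n m, g e) + (multigraphs n m).card) :=
        Finset.sum_congr rfl fun e _ => key e
    _ = (∑ g ∈ multigraphs n m, ∑ e : Fin n × Fin n, g e)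
          + n^2 * (multigraphs n m).card := by
        rw [Finset.sum_add_distrib, Finset.sum_const, Finset.card_univ, smul_eq_mul]
        rw [Finset.sum_comm]
        simp [sq]
    _ = m * (multigraphs n m).card + n^2 * (multigraphs n m).card := by
        rw [Finset.sum_congr rfl (fun g hg => mem_multigraphs.mp hg)]
        rw [Finset.sum_const, smul_eq_mul, mul_comm]
    _ = (n^2 + m) * (multigraphs n m).card := by ring

lemma identity2 {n m : ℕ} :
    ∑ f ∈ multigraphs n (m+1), suppSize f = n^2 * (multigraphs n m).card := by
  calc ∑ f ∈ multigraphs n (m+1), suppSize f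
      = ∑ f ∈ multigraphs n (m+1), ∑ e : Fin n × Fin n, (if 0 < f e then 1 else 0) := by
        refine Finset.sum_congr rfl fun f _ => ?_
        unfold suppSize
        rw [Finset.card_filter]
    _ = ∑ e : Fin n × Fin n, ∑ f ∈ multigraphs n (m+1), (if 0 < f e then 1 else 0) :=
        Finset.sum_comm
    _ = ∑ e : Fin n × Fin n, ∑ _f ∈ (multigraphs n (m+1)).filter (fun f => 0 < f e), 1 := by
        refine Finset.sum_congr rfl fun e _ => ?_
        rw [Finset.sum_filter]
    _ = ∑ _e : Fin n × Fin n, ∑ _g ∈ multigraphs n m, 1 :=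
        Finset.sum_congr rfl fun e _ => sum_comp e (fun _ => 1)
    _ = n^2 * (multigraphs n m).card := by
        simp [Finset.card_univ, sq, mul_comm]

lemma multigraphs_nonempty {n : ℕ} (m : ℕ) (hn : 0 < n) : (multigraphs n m).Nonempty := by
  refine ⟨Pi.single (⟨0, hn⟩, ⟨0, hn⟩) m, mem_multigraphs.mpr ?_⟩
  simp [Finset.sum_pi_single']

/-- If `m = m(n) → ∞` and `m/N → 0` where `N = n²`, and `q = N/(N+m−1)`, then the
support size `Z` of a uniformly random bipartite multigraph from `B'(n,m)` satisfies
`Z = mq + o_p(mq)`: for every `ε > 0`, `Pr[|Z − mq| > ε·mq] → 0` as `n → ∞`. -/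
theorem suppSize_eq_mq_plus_op (m : ℕ → ℕ)
    (hm1 : Filter.Tendsto m Filter.atTop Filter.atTop)
    (hm2 : Filter.Tendsto (fun n => (m n : ℝ) / (n : ℝ) ^ 2) Filter.atTop (nhds 0))
    (ε : ℝ) (hε : 0 < ε) :
    Filter.Tendsto
      (fun n =>
        (((multigraphs n (m n)).filter fun f =>
            ε * ((m n : ℝ) * ((n : ℝ) ^ 2 / ((n : ℝ) ^ 2 + (m n : ℝ) - 1))) <
              |(suppSize f : ℝ) -
                (m n : ℝ) * ((n : ℝ) ^ 2 / ((n : ℝ) ^ 2 + (m n : ℝ) - 1))|).card : ℝ) /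
          ((multigraphs n (m n)).card : ℝ))
      Filter.atTop (nhds 0) := by
  have h0 : Filter.Tendsto (fun n => ε⁻¹ * ((m n : ℝ) / (n : ℝ) ^ 2))
      Filter.atTop (nhds 0) := by
    simpa using hm2.const_mul ε⁻¹
  refine squeeze_zero' (Filter.Eventually.of_forall fun n => by positivity) ?_ h0
  have hn1 : ∀ᶠ n : ℕ in Filter.atTop, 1 ≤ n := Filter.eventually_ge_atTop 1
  have hM1 : ∀ᶠ n : ℕ in Filter.atTop, 1 ≤ m n := hm1.eventually_ge_atTop 1
  have hsmall : ∀ᶠ n : ℕ in Filter.atTop, (m n : ℝ) / (n : ℝ) ^ 2 < ε :=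
    hm2.eventually (gt_mem_nhds hε)
  filter_upwards [hn1, hM1, hsmall] with n hn hM hsm
  set N : ℝ := (n : ℝ) ^ 2 with hNdef
  set M : ℝ := (m n : ℝ) with hMdef
  set μ : ℝ := M * (N / (N + M - 1)) with hμdef
  set cM : ℝ := ((multigraphs n (m n)).card : ℝ) with hcMdef
  -- basic positivity facts
  have hN0 : (0 : ℝ) < N := by
    have : (1 : ℝ) ≤ (n : ℝ) := by exact_mod_cast hn
    rw [hNdef]; nlinarith
  have hM0 : (0 : ℝ) < M := by
    rw [hMdef]; exact_mod_cast hM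
  have hM1' : (1 : ℝ) ≤ M := by rw [hMdef]; exact_mod_cast hM
  have hD0 : (0 : ℝ) < N + M - 1 := by linarith
  have hμ0 : (0 : ℝ) < μ := by rw [hμdef]; positivity
  have hμM : μ ≤ M := by
    rw [hμdef]
    have hq1 : N / (N + M - 1) ≤ 1 := by
      rw [div_le_one hD0]; linarith
    nlinarith
  have hcM0 : (0 : ℝ) < cM := by
    rw [hcMdef]
    exact_mod_cast Finset.card_pos.mpr (multigraphs_nonempty (m n) hn)
  -- the previous count: K = m n - 1
  set K : ℕ := m n - 1 with hKdef
  have hKM : K + 1 = m n := Nat.succ_pred_eq_of_pos hM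
  set c' : ℝ := ((multigraphs n K).card : ℝ) with hc'def
  have hc'0 : (0 : ℝ) ≤ c' := by rw [hc'def]; positivity
  have hI' := identity1 (n := n) (m := K)
  rw [hKM] at hI'
  have hI : M * cM = (N + (K : ℝ)) * c' := by
    rw [hMdef, hcMdef, hc'def, hNdef]; exact_mod_cast hI'
  have hII' := identity2 (n := n) (m := K)
  rw [hKM] at hII'
  have hII : ∑ f ∈ multigraphs n (m n), (suppSize f : ℝ) = N * c' := by
    rw [hc'def, hNdef]; exact_mod_cast hII'
  have hDK : N + M - 1 = N + (K : ℝ) := by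
    have : M = (K : ℝ) + 1 := by rw [hMdef]; exact_mod_cast hKM.symm
    rw [this]; ring
  have hKMle : (K : ℝ) ≤ M := by
    have : M = (K : ℝ) + 1 := by rw [hMdef]; exact_mod_cast hKM.symm
    linarith
  -- M - μ ≤ ε * μ (deterministic upper deviation bound)
  have hMεN : M - 1 ≤ ε * N := by
    have := (div_lt_iff₀ hN0).mp hsm
    linarith
  have hMμ : M - μ ≤ ε * μ := by
    have h1 : M - μ = M * (M - 1) / (N + M - 1) := by
      rw [hμdef]; field_simp; ring
    have h2 : ε * μ = ε * (M * N) / (N + M - 1) := by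
      rw [hμdef]; field_simp
    rw [h1, h2, div_le_div_iff₀ hD0 hD0]
    nlinarith [mul_le_mul_of_nonneg_right (mul_le_mul_of_nonneg_left hMεN hM0.le) hD0.le]
  -- the bad set is contained in the lower-deviation set
  set bad := (multigraphs n (m n)).filter fun f =>
      ε * μ < |(suppSize f : ℝ) - μ| with hbaddef
  set bad2 := (multigraphs n (m n)).filter fun f =>
      ε * μ < M - (suppSize f : ℝ) with hbad2def
  have hsub : bad ⊆ bad2 := by
    intro f hf
    obtain ⟨hf1, hf2⟩ := Finset.mem_filter.mp hf
    refine Finset.mem_filter.mpr ⟨hf1, ?_⟩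
    have hZM : (suppSize f : ℝ) ≤ M := by
      rw [hMdef]; exact_mod_cast suppSize_le hf1
    rcases abs_cases ((suppSize f : ℝ) - μ) with ⟨he, hc⟩ | ⟨he, hc⟩
    · rw [he] at hf2; linarith
    · rw [he] at hf2; linarith
  -- Markov
  have hmarkov : (bad2.card : ℝ) * (ε * μ) ≤ (K : ℝ) * c' := by
    calc (bad2.card : ℝ) * (ε * μ) = ∑ _f ∈ bad2, ε * μ := by
          rw [Finset.sum_const, nsmul_eq_mul]
      _ ≤ ∑ f ∈ bad2, (M - (suppSize f : ℝ)) :=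
          Finset.sum_le_sum fun f hf => le_of_lt (Finset.mem_filter.mp hf).2
      _ ≤ ∑ f ∈ multigraphs n (m n), (M - (suppSize f : ℝ)) := by
          refine Finset.sum_le_sum_of_subset_of_nonneg (Finset.filter_subset _ _)
            fun f hf _ => ?_
          have : (suppSize f : ℝ) ≤ M := by
            rw [hMdef]; exact_mod_cast suppSize_le hf
          linarith
      _ = cM * M - N * c' := by
          rw [Finset.sum_sub_distrib, Finset.sum_const, nsmul_eq_mul, hII, hcMdef]
      _ = (K : ℝ) * c' := by linear_combination hI
  -- conclude
  have hμD : μ * (N + (K : ℝ)) = M * N := by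
    rw [hμdef, ← hDK]; field_simp
  have hNK0 : (0 : ℝ) < N + (K : ℝ) := by rw [← hDK]; exact hD0
  have h4 : (bad2.card : ℝ) * (ε * μ) * (N + (K : ℝ)) ≤ (K : ℝ) * c' * (N + (K : ℝ)) :=
    mul_le_mul_of_nonneg_right hmarkov hNK0.le
  have h5 : (bad2.card : ℝ) * (ε * (M * N)) ≤ (K : ℝ) * (M * cM) := by
    calc (bad2.card : ℝ) * (ε * (M * N))
        = (bad2.card : ℝ) * (ε * μ) * (N + (K : ℝ)) := by rw [← hμD]; ring
      _ ≤ (K : ℝ) * c' * (N + (K : ℝ)) := h4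
      _ = (K : ℝ) * (M * cM) := by rw [hI]; ring
  have h6 : (bad2.card : ℝ) * (ε * N) * M ≤ M * cM * M := by
    nlinarith [mul_le_mul_of_nonneg_right hKMle (mul_nonneg hM0.le hcM0.le)]
  have h7 : (bad2.card : ℝ) * (ε * N) ≤ M * cM := (mul_le_mul_iff_of_pos_right hM0).mp h6
  have hbb : (bad.card : ℝ) ≤ (bad2.card : ℝ) := by
    exact_mod_cast Finset.card_le_card hsub
  have h8 : (bad.card : ℝ) * (ε * N) ≤ M * cM :=
    le_trans (mul_le_mul_of_nonneg_right hbb (by positivity)) h7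
  have hrw : ε⁻¹ * (M / N) = M / (ε * N) := by field_simp
  show (bad.card : ℝ) / cM ≤ ε⁻¹ * (M / N)
  rw [hrw, div_le_div_iff₀ hcM0 (by positivity)]
  linarith
end
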